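/- Let ℓ and m be axiomatic length functions on a group G. Then the pointwise sum ℓ + m is an axiomatic length function on G if and only if ℓ and m have compatible combinatorics and are coherently oriented. -/

import Mathlib

/-- An axiomatic length function on a group `G` (Culler–Morgan / Parry axioms I–VI). -/
def IsLengthFunction {G : Type*} [Group G] (ℓ : G → ℝ) : Prop :=
  (∀ g : G, 0 ≤ ℓ g) ∧
  -- (I)
  ℓ 1 = 0 ∧
  -- (II)
  (∀ g : G, ℓ g = ℓ g⁻¹) ∧
  -- (III)
  (∀ g h : G, ℓ (h * g * h⁻¹) = ℓ g) ∧
  -- (IV)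
  (∀ g h : G, ℓ (g * h) = ℓ (g * h⁻¹) ∨
    max (ℓ (g * h)) (ℓ (g * h⁻¹)) ≤ ℓ g + ℓ h) ∧
  -- (V)
  (∀ g h : G, 0 < ℓ g → 0 < ℓ h →
    (ℓ (g * h) = ℓ (g * h⁻¹) ∧ ℓ g + ℓ h < ℓ (g * h)) ∨
    max (ℓ (g * h)) (ℓ (g * h⁻¹)) = ℓ g + ℓ h) ∧
  -- (VI)
  (∃ g h : G, 0 < ℓ g + ℓ h - ℓ (g * h⁻¹) ∧
    ℓ g + ℓ h - ℓ (g * h⁻¹) < 2 * min (ℓ g) (ℓ h))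

/-- The overlap set `O^ℓ`: pairs of distinct elements with `ℓ(gh) ≠ ℓ(gh⁻¹)`. -/
def OverlapSet {G : Type*} [Group G] (ℓ : G → ℝ) : Set (G × G) :=
  {p : G × G | p.1 ≠ p.2 ∧ ℓ (p.1 * p.2) ≠ ℓ (p.1 * p.2⁻¹)}

/-- The disjoint set `D^ℓ`: pairs of distinct elements with
`ℓ(gh) = ℓ(gh⁻¹) > ℓ(g) + ℓ(h)`. -/
def DisjointSet {G : Type*} [Group G] (ℓ : G → ℝ) : Set (G × G) :=
  {p : G × G | p.1 ≠ p.2 ∧ ℓ (p.1 * p.2) = ℓ (p.1 * p.2⁻¹) ∧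
    ℓ p.1 + ℓ p.2 < ℓ (p.1 * p.2)}

/-- `ℓ` and `m` have compatible combinatorics if `O^ℓ ∩ D^m = ∅ = D^ℓ ∩ O^m`. -/
def CompatibleCombinatorics {G : Type*} [Group G] (ℓ m : G → ℝ) : Prop :=
  OverlapSet ℓ ∩ DisjointSet m = ∅ ∧ DisjointSet ℓ ∩ OverlapSet m = ∅

/-- `ℓ` and `m` are coherently oriented if on `O^ℓ ∩ O^m` the strict inequalities
`ℓ(gh⁻¹) < ℓ(gh)` and `m(gh⁻¹) < m(gh)` are equivalent. -/
def CoherentlyOriented {G : Type*} [Group G] (ℓ m : G → ℝ) : Prop :=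
  ∀ p ∈ OverlapSet ℓ ∩ OverlapSet m,
    (ℓ (p.1 * p.2⁻¹) < ℓ (p.1 * p.2) ↔ m (p.1 * p.2⁻¹) < m (p.1 * p.2))

/-- `(g,h)` is a good pair for `ℓ` if `0 < ℓ(g)+ℓ(h)−ℓ(gh⁻¹) < 2·min{ℓ(g),ℓ(h)}`. -/
def GoodPair {G : Type*} [Group G] (ℓ : G → ℝ) (g h : G) : Prop :=
  0 < ℓ g + ℓ h - ℓ (g * h⁻¹) ∧
  ℓ g + ℓ h - ℓ (g * h⁻¹) < 2 * min (ℓ g) (ℓ h)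

section Aux
variable {G : Type*} [Group G] {ℓ m : G → ℝ}

namespace LFAux

theorem nonneg (hl : IsLengthFunction ℓ) : ∀ g : G, 0 ≤ ℓ g := hl.1
theorem one (hl : IsLengthFunction ℓ) : ℓ (1 : G) = 0 := hl.2.1
theorem inv (hl : IsLengthFunction ℓ) : ∀ g : G, ℓ g⁻¹ = ℓ g := fun g => (hl.2.2.1 g).symm
theorem conj (hl : IsLengthFunction ℓ) : ∀ g k : G, ℓ (k * g * k⁻¹) = ℓ g :=
  fun g k => hl.2.2.2.1 g k
theorem axIV (hl : IsLengthFunction ℓ) : ∀ g h : G, ℓ (g * h) = ℓ (g * h⁻¹) ∨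
    max (ℓ (g * h)) (ℓ (g * h⁻¹)) ≤ ℓ g + ℓ h := hl.2.2.2.2.1
theorem axV (hl : IsLengthFunction ℓ) : ∀ g h : G, 0 < ℓ g → 0 < ℓ h →
    (ℓ (g * h) = ℓ (g * h⁻¹) ∧ ℓ g + ℓ h < ℓ (g * h)) ∨
    max (ℓ (g * h)) (ℓ (g * h⁻¹)) = ℓ g + ℓ h := hl.2.2.2.2.2.1
theorem axVI (hl : IsLengthFunction ℓ) : ∃ g h : G, 0 < ℓ g + ℓ h - ℓ (g * h⁻¹) ∧
    ℓ g + ℓ h - ℓ (g * h⁻¹) < 2 * min (ℓ g) (ℓ h) := hl.2.2.2.2.2.2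

theorem comm (hl : IsLengthFunction ℓ) (x y : G) : ℓ (x * y) = ℓ (y * x) := by
  have h := conj hl (x * y) x⁻¹
  have e : x⁻¹ * (x * y) * x⁻¹⁻¹ = y * x := by group
  rw [e] at h
  exact h.symm

theorem sq (hl : IsLengthFunction ℓ) (g : G) : ℓ (g * g) = 2 * ℓ g := by
  have e : g * g⁻¹ = 1 := by group
  rcases (lt_or_eq_of_le (nonneg hl g)) with hpos | hzero
  · rcases axV hl g g hpos hpos with ⟨heq, hlt⟩ | hmax
    · rw [e, one hl] at heq
      have := nonneg hl (g * g)
      rw [heq] at hlt ⊢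
      linarith
    · rw [e, one hl] at hmax
      rcases max_cases (ℓ (g * g)) (0 : ℝ) with ⟨h1, h2⟩ | ⟨h1, h2⟩ <;> linarith
  · rcases axIV hl g g with heq | hmax
    · rw [e, one hl] at heq
      rw [heq]; linarith
    · rw [e, one hl] at hmax
      have h1 := le_max_left (ℓ (g * g)) (ℓ 1)
      have h2 := nonneg hl (g * g)
      rw [one hl] at h1
      have : ℓ (g * g) = 0 := le_antisymm (le_trans h1 (by linarith)) h2
      rw [this]; linarith

theorem zero_step (hl : IsLengthFunction ℓ) {g k : G} (hz : ℓ g = 0)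
    (hlt : ℓ (g * k) < ℓ k) : ℓ (g * (g * k)) = ℓ k := by
  have hv : ℓ (k⁻¹ * g⁻¹ * k) = 0 := by
    have h := conj hl g⁻¹ k⁻¹
    have e : k⁻¹ * g⁻¹ * k⁻¹⁻¹ = k⁻¹ * g⁻¹ * k := by group
    rw [e] at h
    rw [h, inv hl, hz]
  rcases axIV hl (g * k) (k⁻¹ * g⁻¹ * k) with heq | hmax
  · have e1 : g * k * (k⁻¹ * g⁻¹ * k) = k := by group
    have e2 : g * k * (k⁻¹ * g⁻¹ * k)⁻¹ = g * (g * k) := by group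
    rw [e1, e2] at heq
    exact heq.symm
  · have e1 : g * k * (k⁻¹ * g⁻¹ * k) = k := by group
    rw [e1, hv] at hmax
    have h1 := le_max_left (ℓ k) (ℓ (g * k * (k⁻¹ * g⁻¹ * k)⁻¹))
    linarith

/-- D-pair from a zero-length deficit. -/
theorem zero_step_disjoint (hl : IsLengthFunction ℓ) {g k : G} (hz : ℓ g = 0)
    (hlt : ℓ (g * k) < ℓ k) : ((g, g * k) : G × G) ∈ DisjointSet ℓ := by
  have hk1 : k ≠ 1 := by
    intro h
    rw [h, one hl] at hlt
    exact absurd hlt (not_lt.mpr (nonneg hl _))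
  refine ⟨?_, ?_, ?_⟩
  · simp only [ne_eq]
    intro h
    exact hk1 (by
      have : g * 1 = g * k := by rw [mul_one]; exact h
      exact (mul_left_cancel this).symm)
  · show ℓ (g * (g * k)) = ℓ (g * (g * k)⁻¹)
    rw [zero_step hl hz hlt]
    have e : g * (g * k)⁻¹ = g * k⁻¹ * g⁻¹ := by group
    rw [e, conj hl, inv hl]
  · show ℓ g + ℓ (g * k) < ℓ (g * (g * k))
    rw [zero_step hl hz hlt, hz]
    linarith

/-- usable forms of compatibility -/
theorem compat_notD (hc : OverlapSet ℓ ∩ DisjointSet m = ∅) {g h : G}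
    (h1 : g ≠ h) (h2 : ℓ (g * h) ≠ ℓ (g * h⁻¹)) :
    ¬(m (g * h) = m (g * h⁻¹) ∧ m g + m h < m (g * h)) := by
  intro hD
  have : ((g, h) : G × G) ∈ OverlapSet ℓ ∩ DisjointSet m :=
    ⟨⟨h1, h2⟩, ⟨h1, hD.1, hD.2⟩⟩
  rw [hc] at this
  exact this

theorem compat_eq (hc : DisjointSet ℓ ∩ OverlapSet m = ∅) {g h : G}
    (hD : ((g, h) : G × G) ∈ DisjointSet ℓ) : m (g * h) = m (g * h⁻¹) := by
  by_contra hne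
  have : ((g, h) : G × G) ∈ DisjointSet ℓ ∩ OverlapSet m := ⟨hD, ⟨hD.1, hne⟩⟩
  rw [hc] at this
  exact this

/-- Lemma M : compatibility propagates vanishing. -/
theorem compat_zero (hl : IsLengthFunction ℓ) (hm : IsLengthFunction m)
    (hOD : OverlapSet ℓ ∩ DisjointSet m = ∅)
    (hDO : DisjointSet ℓ ∩ OverlapSet m = ∅)
    {g h : G} (hz : ℓ g = 0) (ha : ℓ (g * h) < ℓ h) (hb : ℓ (g * h⁻¹) < ℓ h) :
    m g = 0 := by
  have hL : 0 < ℓ h := lt_of_le_of_lt (nonneg hl _) ha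
  -- the two D-pairs for ℓ
  have D1 : ((g, g * h) : G × G) ∈ DisjointSet ℓ := zero_step_disjoint hl hz ha
  have hb' : ℓ (g * h⁻¹) < ℓ h⁻¹ := by rw [inv hl]; exact hb
  have D2 : ((g, g * h⁻¹) : G × G) ∈ DisjointSet ℓ := zero_step_disjoint hl hz hb'
  -- compat : m is "equal" on these pairs
  have hm1 : m (g * (g * h)) = m h := by
    have := compat_eq hDO D1
    have e : g * (g * h)⁻¹ = g * h⁻¹ * g⁻¹ := by group
    rw [e, conj hm, inv hm] at this
    exact this
  have hm2 : m (g * (g * h⁻¹)) = m h := by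
    have := compat_eq hDO D2
    have e : g * (g * h⁻¹)⁻¹ = g * h * g⁻¹ := by group
    rw [e, conj hm] at this
    exact this
  -- values of ℓ at g²h, g²h⁻¹
  have hl1 : ℓ (g * (g * h)) = ℓ h := zero_step hl hz ha
  by_contra hmgne
  have hmg : 0 < m g := lt_of_le_of_ne (nonneg hm g) (Ne.symm hmgne)
  have hmsq : m (g * g) = 2 * m g := sq hm g
  rcases (lt_or_eq_of_le (nonneg hm h)) with hmh | hmh0
  · -- case m h > 0 : axiom V at (g*g, h) kills it
    have hVm := axV hm (g * g) h (by rw [hmsq]; linarith) hmh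
    have e1 : g * g * h = g * (g * h) := by group
    have e2 : g * g * h⁻¹ = g * (g * h⁻¹) := by group
    rw [e1, e2, hm1, hm2, hmsq] at hVm
    rcases hVm with ⟨_, hlt2⟩ | hmax
    · linarith
    · rw [max_self] at hmax
      linarith
  · -- case m h = 0
    have hmh0' : m h = 0 := hmh0.symm
    -- m(h * (g*g)) = 0 < m(g*g)
    have hcm : m (h * (g * g)) = 0 := by
      have e : g * g * h = g * (g * h) := by group
      have : m (h * (g * g)) = m (g * g * h) := comm hm h (g * g)
      rw [this, e, hm1, hmh0']
    have hlt2 : m (h * (g * g)) < m (g * g) := by rw [hcm, hmsq]; linarith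
    have D3 : ((h, h * (g * g)) : G × G) ∈ DisjointSet m :=
      zero_step_disjoint hm hmh0' hlt2
    -- but (h, h*(g*g)) is an ℓ-overlap pair : contradiction with hOD
    -- ℓ(h * (h * (g*g))) = ℓ(g²h²) = 2 ℓ h  while  ℓ(h * (h*(g*g))⁻¹) = ℓ(g⁻²) = 0
    have hlgg : ℓ (g * g) = 0 := by rw [sq hl, hz]; ring
    have hl2 : ℓ (g * (g * h) * h) = 2 * ℓ h := by
      have hV := axV hl (g * (g * h)) h (by rw [hl1]; exact hL) hL
      have e2 : g * (g * h) * h⁻¹ = g * g := by group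
      rw [e2, hlgg, hl1] at hV
      rcases hV with ⟨heq, hlt3⟩ | hmax
      · rw [heq] at hlt3; linarith
      · rcases max_cases (ℓ (g * (g * h) * h)) (0 : ℝ) with ⟨h1, _⟩ | ⟨h1, _⟩ <;> linarith
    have hOl : ℓ (h * (h * (g * g))) ≠ ℓ (h * (h * (g * g))⁻¹) := by
      have ea : h * (h * (g * g)) = (h * h) * (g * (g * h) * h) * (h * h)⁻¹ := by group
      have eb : h * (h * (g * g))⁻¹ = h * (g * g)⁻¹ * h⁻¹ := by group
      rw [ea, conj hl, hl2, eb, conj hl, inv hl, hlgg]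
      linarith
    exact compat_notD hOD D3.1 hOl ⟨D3.2.1, D3.2.2⟩


/-- non-deficiency at pairs with positive sum-lengths. -/
theorem not_deficient (hl : IsLengthFunction ℓ) (hm : IsLengthFunction m)
    (hOD : OverlapSet ℓ ∩ DisjointSet m = ∅)
    (hDO : DisjointSet ℓ ∩ OverlapSet m = ∅)
    {g h : G} (hsg : 0 < ℓ g + m g) (hsh : 0 < ℓ h + m h) :
    ℓ g + ℓ h ≤ max (ℓ (g * h)) (ℓ (g * h⁻¹)) := by
  by_contra hdef
  push_neg at hdef
  have ha : ℓ (g * h) < ℓ g + ℓ h := lt_of_le_of_lt (le_max_left _ _) hdef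
  have hb : ℓ (g * h⁻¹) < ℓ g + ℓ h := lt_of_le_of_lt (le_max_right _ _) hdef
  by_cases hg0 : ℓ g = 0
  · have ha' : ℓ (g * h) < ℓ h := by rw [hg0] at ha; linarith
    have hb' : ℓ (g * h⁻¹) < ℓ h := by rw [hg0] at hb; linarith
    have := compat_zero hl hm hOD hDO hg0 ha' hb'
    rw [hg0, this] at hsg
    linarith
  · by_cases hh0 : ℓ h = 0
    · have ha' : ℓ (h * g) < ℓ g := by
        rw [← comm hl]; rw [hh0] at ha; linarith
      have hb' : ℓ (h * g⁻¹) < ℓ g := by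
        have e : (h * g⁻¹)⁻¹ = g * h⁻¹ := by group
        rw [← inv hl (h * g⁻¹), e]; rw [hh0] at hb; linarith
      have := compat_zero hl hm hOD hDO hh0 ha' hb'
      rw [hh0, this] at hsh
      linarith
    · have hg : 0 < ℓ g := lt_of_le_of_ne (nonneg hl g) (Ne.symm hg0)
      have hh : 0 < ℓ h := lt_of_le_of_ne (nonneg hl h) (Ne.symm hh0)
      rcases axV hl g h hg hh with ⟨heq, hlt⟩ | hmax
      · linarith
      · linarith [hdef.trans_le (le_of_eq hmax.symm), le_refl (0:ℝ)]

theorem sum_IV (hl : IsLengthFunction ℓ) (hm : IsLengthFunction m)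
    (hOD : OverlapSet ℓ ∩ DisjointSet m = ∅)
    (hDO : DisjointSet ℓ ∩ OverlapSet m = ∅) :
    ∀ g h : G, ℓ (g * h) + m (g * h) = ℓ (g * h⁻¹) + m (g * h⁻¹) ∨
      max (ℓ (g * h) + m (g * h)) (ℓ (g * h⁻¹) + m (g * h⁻¹)) ≤
        (ℓ g + m g) + (ℓ h + m h) := by
  intro g h
  by_cases hgh : g = h
  · subst hgh
    right
    have e : g * g⁻¹ = 1 := by group
    rw [e, one hl, one hm, sq hl, sq hm]
    have h1 := nonneg hl g
    have h2 := nonneg hm g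
    refine max_le (by linarith) (by linarith)
  by_cases hle : ℓ (g * h) = ℓ (g * h⁻¹)
  · by_cases hme : m (g * h) = m (g * h⁻¹)
    · left; rw [hle, hme]
    · have hnotD : ℓ (g * h) ≤ ℓ g + ℓ h := by
        by_contra hgt
        push_neg at hgt
        have : ((g, h) : G × G) ∈ DisjointSet ℓ ∩ OverlapSet m :=
          ⟨⟨hgh, hle, hgt⟩, ⟨hgh, hme⟩⟩
        rw [hDO] at this
        exact this
      have hIVm := (axIV hm g h).resolve_left hme
      have h1 := le_trans (le_max_left (m (g*h)) (m (g*h⁻¹))) hIVm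
      have h2 := le_trans (le_max_right (m (g*h)) (m (g*h⁻¹))) hIVm
      right
      refine max_le (by linarith) (by rw [← hle]; linarith)
  · have hIVl := (axIV hl g h).resolve_left hle
    have h1 := le_trans (le_max_left (ℓ (g*h)) (ℓ (g*h⁻¹))) hIVl
    have h2 := le_trans (le_max_right (ℓ (g*h)) (ℓ (g*h⁻¹))) hIVl
    by_cases hme : m (g * h) = m (g * h⁻¹)
    · have hnotD : m (g * h) ≤ m g + m h := by
        by_contra hgt
        push_neg at hgt
        exact compat_notD hOD hgh hle ⟨hme, hgt⟩
      right
      refine max_le (by linarith) (by rw [← hme]; linarith)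
    · have hIVm := (axIV hm g h).resolve_left hme
      have h3 := le_trans (le_max_left (m (g*h)) (m (g*h⁻¹))) hIVm
      have h4 := le_trans (le_max_right (m (g*h)) (m (g*h⁻¹))) hIVm
      right
      refine max_le (by linarith) (by linarith)

theorem sum_V (hl : IsLengthFunction ℓ) (hm : IsLengthFunction m)
    (hOD : OverlapSet ℓ ∩ DisjointSet m = ∅)
    (hDO : DisjointSet ℓ ∩ OverlapSet m = ∅)
    (hcoh : ∀ p ∈ OverlapSet ℓ ∩ OverlapSet m,
      (ℓ (p.1 * p.2⁻¹) < ℓ (p.1 * p.2) ↔ m (p.1 * p.2⁻¹) < m (p.1 * p.2))) :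
    ∀ g h : G, 0 < ℓ g + m g → 0 < ℓ h + m h →
      (ℓ (g * h) + m (g * h) = ℓ (g * h⁻¹) + m (g * h⁻¹) ∧
        (ℓ g + m g) + (ℓ h + m h) < ℓ (g * h) + m (g * h)) ∨
      max (ℓ (g * h) + m (g * h)) (ℓ (g * h⁻¹) + m (g * h⁻¹)) =
        (ℓ g + m g) + (ℓ h + m h) := by
  intro g h hsg hsh
  by_cases hgh : g = h
  · subst hgh
    right
    have e : g * g⁻¹ = 1 := by group
    rw [e, one hl, one hm, sq hl, sq hm]
    rw [max_eq_left (by linarith)]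
    ring
  have hOD2 : OverlapSet m ∩ DisjointSet ℓ = ∅ := by rw [Set.inter_comm]; exact hDO
  have hDO2 : DisjointSet m ∩ OverlapSet ℓ = ∅ := by rw [Set.inter_comm]; exact hOD
  have NDl : ℓ g + ℓ h ≤ max (ℓ (g * h)) (ℓ (g * h⁻¹)) :=
    not_deficient hl hm hOD hDO hsg hsh
  have NDm : m g + m h ≤ max (m (g * h)) (m (g * h⁻¹)) :=
    not_deficient hm hl hOD2 hDO2 (by linarith) (by linarith)
  by_cases hle : ℓ (g * h) = ℓ (g * h⁻¹)
  · have NDl' : ℓ g + ℓ h ≤ ℓ (g * h) := by rw [← hle, max_self] at NDl; exact NDl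
    by_cases hme : m (g * h) = m (g * h⁻¹)
    · have NDm' : m g + m h ≤ m (g * h) := by rw [← hme, max_self] at NDm; exact NDm
      rcases eq_or_lt_of_le (by linarith :
          (ℓ g + m g) + (ℓ h + m h) ≤ ℓ (g * h) + m (g * h)) with heq | hlt
      · right
        rw [← hle, ← hme, max_self]
        exact heq.symm
      · left
        exact ⟨by rw [hle, hme], hlt⟩
    · -- ℓ equal, m overlap
      have hnotDl : ℓ (g * h) ≤ ℓ g + ℓ h := by
        by_contra hgt
        push_neg at hgt
        have : ((g, h) : G × G) ∈ DisjointSet ℓ ∩ OverlapSet m :=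
          ⟨⟨hgh, hle, hgt⟩, ⟨hgh, hme⟩⟩
        rw [hDO] at this
        exact this
      have hclS : ℓ (g * h) = ℓ g + ℓ h := le_antisymm hnotDl NDl'
      have hmaxm : max (m (g * h)) (m (g * h⁻¹)) = m g + m h :=
        le_antisymm ((axIV hm g h).resolve_left hme) NDm
      right
      rw [← hle, max_add_add_left, hmaxm, hclS]; ring
  · by_cases hme : m (g * h) = m (g * h⁻¹)
    · have NDm' : m g + m h ≤ m (g * h) := by rw [← hme, max_self] at NDm; exact NDm
      have hnotDm : m (g * h) ≤ m g + m h :=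
        not_lt.mp (fun hgt => compat_notD hOD hgh hle ⟨hme, hgt⟩)
      have hcmS : m (g * h) = m g + m h := le_antisymm hnotDm NDm'
      have hmaxl : max (ℓ (g * h)) (ℓ (g * h⁻¹)) = ℓ g + ℓ h :=
        le_antisymm ((axIV hl g h).resolve_left hle) NDl
      right
      rw [← hme, max_add_add_right, hmaxl, hcmS]; ring
    · -- both overlap : use coherence
      have hiff := hcoh (g, h) ⟨⟨hgh, hle⟩, ⟨hgh, hme⟩⟩
      simp only at hiff
      have hmaxl : max (ℓ (g * h)) (ℓ (g * h⁻¹)) = ℓ g + ℓ h :=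
        le_antisymm ((axIV hl g h).resolve_left hle) NDl
      have hmaxm : max (m (g * h)) (m (g * h⁻¹)) = m g + m h :=
        le_antisymm ((axIV hm g h).resolve_left hme) NDm
      rcases lt_or_gt_of_ne hle with hlt | hgt
      · -- ℓ(gh) < ℓ(gh⁻¹)
        have hmlt : m (g * h) < m (g * h⁻¹) := by
          rcases lt_or_gt_of_ne hme with h' | h'
          · exact h'
          · exact absurd (hiff.mpr h') (not_lt.mpr (le_of_lt hlt))
        have hbl : ℓ (g * h⁻¹) = ℓ g + ℓ h := by
          rw [max_eq_right (le_of_lt hlt)] at hmaxl; exact hmaxl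
        have hbm : m (g * h⁻¹) = m g + m h := by
          rw [max_eq_right (le_of_lt hmlt)] at hmaxm; exact hmaxm
        right
        rw [max_eq_right (by linarith)]
        linarith
      · have hmgt : m (g * h⁻¹) < m (g * h) := hiff.mp hgt
        have hbl : ℓ (g * h) = ℓ g + ℓ h := by
          rw [max_eq_left (le_of_lt hgt)] at hmaxl; exact hmaxl
        have hbm : m (g * h) = m g + m h := by
          rw [max_eq_left (le_of_lt hmgt)] at hmaxm; exact hmaxm
        right
        rw [max_eq_left (by linarith)]
        linarith

theorem sum_VI (hl : IsLengthFunction ℓ) (hm : IsLengthFunction m)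
    (hOD : OverlapSet ℓ ∩ DisjointSet m = ∅) :
    ∃ g h : G, 0 < (ℓ g + m g) + (ℓ h + m h) - (ℓ (g * h⁻¹) + m (g * h⁻¹)) ∧
      (ℓ g + m g) + (ℓ h + m h) - (ℓ (g * h⁻¹) + m (g * h⁻¹)) <
        2 * min (ℓ g + m g) (ℓ h + m h) := by
  obtain ⟨g, h, h1, h2⟩ := axVI hl
  have hminpos : 0 < min (ℓ g) (ℓ h) := by linarith
  have hg : 0 < ℓ g := lt_of_lt_of_le hminpos (min_le_left _ _)
  have hh : 0 < ℓ h := lt_of_lt_of_le hminpos (min_le_right _ _)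
  have hmin1 := min_le_left (ℓ g) (ℓ h)
  have hmin2 := min_le_right (ℓ g) (ℓ h)
  have habs1 : ℓ g - ℓ h < ℓ (g * h⁻¹) := by linarith
  have habs2 : ℓ h - ℓ g < ℓ (g * h⁻¹) := by linarith
  have hdpos : 0 < ℓ (g * h⁻¹) := by linarith
  have hdS : ℓ (g * h⁻¹) < ℓ g + ℓ h := by linarith
  -- the pair is an overlap pair for ℓ
  have hc : ℓ (g * h) = ℓ g + ℓ h := by
    rcases axV hl g h hg hh with ⟨heq, hlt⟩ | hmax
    · rw [heq] at hlt; linarith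
    · rcases max_cases (ℓ (g * h)) (ℓ (g * h⁻¹)) with ⟨e1, _⟩ | ⟨e1, _⟩ <;> rw [e1] at hmax
      · exact hmax
      · linarith
  have hle : ℓ (g * h) ≠ ℓ (g * h⁻¹) := by rw [hc]; exact ne_of_gt hdS
  have hgh : g ≠ h := by
    intro he
    rw [he] at hdpos
    have e : h * h⁻¹ = 1 := by group
    rw [e, one hl] at hdpos
    linarith
  -- m(gh⁻¹) ≤ m g + m h
  have hdm_ub : m (g * h⁻¹) ≤ m g + m h := by
    by_cases hme : m (g * h) = m (g * h⁻¹)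
    · have := compat_notD hOD hgh hle
      rw [← hme]
      by_contra hgt
      push_neg at hgt
      exact this ⟨hme, hgt⟩
    · have := (axIV hm g h).resolve_left hme
      exact le_trans (le_max_right _ _) this
  -- reverse triangle inequalities for m at (g,h)
  have claim1 : m g - m h ≤ m (g * h⁻¹) := by
    by_contra hclt
    push_neg at hclt
    -- (g h⁻¹, h) is an ℓ-overlap pair
    have e1 : g * h⁻¹ * h = g := by group
    have hv2 : ℓ (g * h⁻¹ * h⁻¹) = ℓ (g * h⁻¹) + ℓ h := by
      rcases axV hl (g * h⁻¹) h hdpos hh with ⟨heq2, hlt2⟩ | hmax2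
      · rw [e1] at hlt2; linarith
      · rw [e1] at hmax2
        rcases max_cases (ℓ g) (ℓ (g * h⁻¹ * h⁻¹)) with ⟨e2, _⟩ | ⟨e2, _⟩ <;>
          rw [e2] at hmax2
        · linarith
        · exact hmax2
    have hne2 : ℓ (g * h⁻¹ * h) ≠ ℓ (g * h⁻¹ * h⁻¹) := by
      rw [e1, hv2]; intro he; linarith
    have hne_el : g * h⁻¹ ≠ h := by
      intro he
      have hg2 : g = h * h := mul_inv_eq_iff_eq_mul.mp he
      rw [hg2] at habs1
      have e4 : h * h * h⁻¹ = h := by group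
      rw [e4, sq hl] at habs1
      linarith
    rcases axIV hm (g * h⁻¹) h with hmeq | hmmax
    · refine compat_notD hOD hne_el hne2 ⟨hmeq, ?_⟩
      rw [e1] at hmeq ⊢
      linarith
    · have := le_trans (le_max_left _ _) hmmax
      rw [e1] at this
      linarith
  have claim2 : m h - m g ≤ m (g * h⁻¹) := by
    by_contra hclt
    push_neg at hclt
    have e1 : h * g⁻¹ * g = h := by group
    have hlhg : ℓ (h * g⁻¹) = ℓ (g * h⁻¹) := by
      have e : (h * g⁻¹)⁻¹ = g * h⁻¹ := by group
      rw [← e, inv hl]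
    have hmhg : m (h * g⁻¹) = m (g * h⁻¹) := by
      have e : (h * g⁻¹)⁻¹ = g * h⁻¹ := by group
      rw [← e, inv hm]
    have hdpos' : 0 < ℓ (h * g⁻¹) := by rw [hlhg]; exact hdpos
    have hv2 : ℓ (h * g⁻¹ * g⁻¹) = ℓ (g * h⁻¹) + ℓ g := by
      rcases axV hl (h * g⁻¹) g hdpos' hg with ⟨heq2, hlt2⟩ | hmax2
      · rw [e1, hlhg] at hlt2; linarith
      · rw [e1, hlhg] at hmax2
        rcases max_cases (ℓ h) (ℓ (h * g⁻¹ * g⁻¹)) with ⟨e2, _⟩ | ⟨e2, _⟩ <;>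
          rw [e2] at hmax2
        · linarith
        · exact hmax2
    have hne2 : ℓ (h * g⁻¹ * g) ≠ ℓ (h * g⁻¹ * g⁻¹) := by
      rw [e1, hv2]; intro he; linarith
    have hne_el : h * g⁻¹ ≠ g := by
      intro he
      have hg2 : h = g * g := mul_inv_eq_iff_eq_mul.mp he
      rw [hg2] at habs2
      have e4 : g * (g * g)⁻¹ = g⁻¹ := by group
      rw [e4, inv hl, sq hl] at habs2
      linarith
    rcases axIV hm (h * g⁻¹) g with hmeq | hmmax
    · refine compat_notD hOD hne_el hne2 ⟨hmeq, ?_⟩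
      rw [e1] at hmeq ⊢
      rw [hmhg]
      linarith
    · have := le_trans (le_max_left _ _) hmmax
      rw [e1, hmhg] at this
      linarith
  refine ⟨g, h, by linarith, ?_⟩
  have hmins : min (ℓ g) (ℓ h) + min (m g) (m h) ≤ min (ℓ g + m g) (ℓ h + m h) := by
    refine le_min ?_ ?_
    · have := min_le_left (m g) (m h); linarith
    · have := min_le_right (m g) (m h); linarith
  have hbeta : m g + m h - m (g * h⁻¹) ≤ 2 * min (m g) (m h) := by
    rcases le_total (m g) (m h) with hmm | hmm
    · rw [min_eq_left hmm]; linarith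
    · rw [min_eq_right hmm]; linarith
  linarith

/-- Forward compatibility, case `ℓ g = 0`. -/
theorem fwd_compat_zero (hl : IsLengthFunction ℓ) (hm : IsLengthFunction m)
    (hs : IsLengthFunction (fun x => ℓ x + m x)) {g h : G}
    (hz : ℓ g = 0) (hne : ℓ (g * h) ≠ ℓ (g * h⁻¹))
    (hDm : m (g * h) = m (g * h⁻¹)) (hgap : m g + m h < m (g * h)) : False := by
  have hmg := nonneg hm g
  have hmh := nonneg hm h
  have hepos : 0 < m (g * h) := by linarith
  -- step 1 : both ℓ-values are < ℓ h
  have hsIV := axIV hs g h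
  have hab : ℓ (g * h) < ℓ h ∧ ℓ (g * h⁻¹) < ℓ h := by
    rcases hsIV with heq | hmax
    · exact absurd (by linarith : ℓ (g * h) = ℓ (g * h⁻¹)) hne
    · have h1 := le_trans (le_max_left _ _) hmax
      have h2 := le_trans (le_max_right _ _) hmax
      rw [hz] at h1 h2
      constructor <;> linarith
  obtain ⟨ha, hb⟩ := hab
  have hL : 0 < ℓ h := lt_of_le_of_lt (nonneg hl (g * h)) ha
  have hh2 : ℓ (h * h) = 2 * ℓ h := sq hl h
  have hmh2 : m (h * h) = 2 * m h := sq hm h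
  -- ℓ(g h g h⁻¹) = 2 ℓ h
  have hlb' : ℓ (h * g⁻¹) = ℓ (g * h⁻¹) := by
    have e : (h * g⁻¹)⁻¹ = g * h⁻¹ := by group
    rw [← e, inv hl]
  have e1 : g * h * (h * g⁻¹) = g * (h * h) * g⁻¹ := by group
  have e2 : g * h * (h * g⁻¹)⁻¹ = g * h * (g * h⁻¹) := by group
  have hlval : ℓ (g * h * (h * g⁻¹)) = 2 * ℓ h := by rw [e1, conj hl, hh2]
  have hghgh : ℓ (g * h * (g * h⁻¹)) = 2 * ℓ h := by
    rcases axIV hl (g * h) (h * g⁻¹) with heq | hmax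
    · rw [hlval, e2] at heq; exact heq.symm
    · have h1 := le_trans (le_max_left _ _) hmax
      rw [hlval, hlb'] at h1
      linarith
  -- m(g h g h⁻¹) = 2 m(g h)
  have e3 : g * h * (g * h⁻¹)⁻¹ = g * (h * h) * g⁻¹ := by group
  have hmval : m (g * h * (g * h⁻¹)⁻¹) = 2 * m h := by rw [e3, conj hm, hmh2]
  have hmm : m (g * h * (g * h⁻¹)) = 2 * m (g * h) := by
    rcases axV hm (g * h) (g * h⁻¹) hepos (by rw [← hDm]; exact hepos) with
      ⟨heq, hlt⟩ | hmax
    · rw [hmval] at heq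
      rw [heq] at hlt
      linarith
    · rw [hmval] at hmax
      rcases max_cases (m (g * h * (g * h⁻¹))) (2 * m h) with ⟨e4, _⟩ | ⟨e4, h5⟩ <;>
        rw [e4] at hmax
      · rw [hmax, hDm]; ring
      · linarith [hDm ▸ hgap]
  -- contradiction via IV(s) at (g h, g h⁻¹)
  have hsIV2 := axIV hs (g * h) (g * h⁻¹)
  rcases hsIV2 with heq | hmax
  · rw [hghgh, hmm] at heq
    have e5 : ℓ (g * h * (g * h⁻¹)⁻¹) = 2 * ℓ h := by rw [e3, conj hl, hh2]
    rw [e5, hmval] at heq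
    linarith
  · have h1 := le_trans (le_max_left _ _) hmax
    rw [hghgh, hmm, hDm] at h1
    linarith

/-- Forward direction : `O^ℓ ∩ D^m = ∅`. -/
theorem fwd_compat (hl : IsLengthFunction ℓ) (hm : IsLengthFunction m)
    (hs : IsLengthFunction (fun x => ℓ x + m x)) :
    OverlapSet ℓ ∩ DisjointSet m = ∅ := by
  rw [Set.eq_empty_iff_forall_notMem]
  rintro ⟨g, h⟩ ⟨⟨hgh, hne⟩, ⟨_, hDm, hgap⟩⟩
  simp only at hne hDm hgap hgh
  by_cases hg0 : ℓ g = 0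
  · exact fwd_compat_zero hl hm hs hg0 hne hDm hgap
  by_cases hh0 : ℓ h = 0
  · have hcomm : ℓ (h * g) = ℓ (g * h) := (comm hl g h).symm
    have hinvv : ℓ (h * g⁻¹) = ℓ (g * h⁻¹) := by
      have e : (h * g⁻¹)⁻¹ = g * h⁻¹ := by group
      rw [← e, inv hl]
    have hcommm : m (h * g) = m (g * h) := (comm hm g h).symm
    have hinvm : m (h * g⁻¹) = m (g * h⁻¹) := by
      have e : (h * g⁻¹)⁻¹ = g * h⁻¹ := by group
      rw [← e, inv hm]
    refine fwd_compat_zero (g := h) (h := g) hl hm hs hh0 ?_ ?_ ?_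
    · rw [hcomm, hinvv]; exact hne
    · rw [hcommm, hinvm]; exact hDm
    · rw [hcommm]; linarith
  · have hg : 0 < ℓ g := lt_of_le_of_ne (nonneg hl g) (Ne.symm hg0)
    have hh : 0 < ℓ h := lt_of_le_of_ne (nonneg hl h) (Ne.symm hh0)
    have hmaxl : max (ℓ (g * h)) (ℓ (g * h⁻¹)) = ℓ g + ℓ h := by
      rcases axV hl g h hg hh with ⟨heq, _⟩ | hmax
      · exact absurd heq hne
      · exact hmax
    have hsIV := axIV hs g h
    rcases hsIV with heq | hmax
    · exact hne (by linarith)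
    · have h1 := le_trans (le_max_left _ _) hmax
      have h2 := le_trans (le_max_right _ _) hmax
      have hlo1 : ℓ (g * h) < ℓ g + ℓ h := by linarith
      have hlo2 : ℓ (g * h⁻¹) < ℓ g + ℓ h := by linarith
      rcases max_cases (ℓ (g * h)) (ℓ (g * h⁻¹)) with ⟨e4, _⟩ | ⟨e4, _⟩ <;>
        rw [e4] at hmaxl <;> linarith

/-- Forward coherence, hard case `ℓ g = m g = 0`. -/
theorem fwd_coh_zero (hl : IsLengthFunction ℓ) (hm : IsLengthFunction m)
    (hs : IsLengthFunction (fun x => ℓ x + m x)) {g h : G}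
    (hzl : ℓ g = 0) (hzm : m g = 0)
    (hab : ℓ (g * h⁻¹) < ℓ (g * h)) (hcd : m (g * h) < m (g * h⁻¹)) : False := by
  have haL : ℓ (g * h) ≤ ℓ h := by
    have := le_trans (le_max_left _ _) ((axIV hl g h).resolve_left (ne_of_gt hab))
    rw [hzl] at this; linarith
  have hdM : m (g * h⁻¹) ≤ m h := by
    have := le_trans (le_max_right _ _) ((axIV hm g h).resolve_left (ne_of_lt hcd))
    rw [hzm] at this; linarith
  have h0a : 0 < ℓ (g * h) := lt_of_le_of_lt (nonneg hl _) hab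
  have h0d : 0 < m (g * h⁻¹) := lt_of_le_of_lt (nonneg hm _) hcd
  have hL : 0 < ℓ h := lt_of_lt_of_le h0a haL
  have hM : 0 < m h := lt_of_lt_of_le h0d hdM
  have hbL : ℓ (g * h⁻¹) < ℓ h := lt_of_lt_of_le hab haL
  have hcM : m (g * h) < m h := lt_of_lt_of_le hcd hdM
  -- step 3 : s(g * (g h⁻¹)) = ℓ h + m h
  have e1 : g * (g * h⁻¹)⁻¹ = g * h * g⁻¹ := by group
  have hsIV := axIV hs g (g * h⁻¹)
  have hP : ℓ (g * (g * h⁻¹)) + m (g * (g * h⁻¹)) = ℓ h + m h := by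
    rcases hsIV with heq | hmax
    · rw [e1, conj hl, conj hm] at heq; exact heq
    · have h1 := le_trans (le_max_right _ _) hmax
      rw [e1, conj hl, conj hm, hzl, hzm] at h1
      linarith
  -- step 4 : ℓ(g * (g h⁻¹)) = ℓ h
  have hPl : ℓ (g * (g * h⁻¹)) = ℓ h := by
    rcases axIV hl g (g * h⁻¹) with heq | hmax
    · rw [e1, conj hl] at heq; exact heq
    · have h1 := le_trans (le_max_right _ _) hmax
      rw [e1, conj hl, hzl] at h1
      linarith
  have hPm : m (g * (g * h⁻¹)) = m h := by linarith
  -- step 5 : s(g h⁻¹ h⁻¹) = (b + d) + (L + M)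
  have e2 : g * h⁻¹ * h⁻¹⁻¹ = g := by group
  have hsV := axV hs (g * h⁻¹) h⁻¹
  rw [inv hl, inv hm] at hsV
  have hsV2 := hsV (by linarith [nonneg hl (g * h⁻¹)]) (by linarith)
  have hR : ℓ (g * h⁻¹ * h⁻¹) + m (g * h⁻¹ * h⁻¹) =
      (ℓ (g * h⁻¹) + m (g * h⁻¹)) + (ℓ h + m h) := by
    rcases hsV2 with ⟨heq, hlt⟩ | hmax
    · rw [e2, hzl, hzm] at heq
      rw [heq] at hlt
      linarith [nonneg hl (g * h⁻¹), nonneg hm (g * h⁻¹)]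
    · rw [e2, hzl, hzm] at hmax
      rcases max_cases (ℓ (g * h⁻¹ * h⁻¹) + m (g * h⁻¹ * h⁻¹)) ((0:ℝ) + 0) with
        ⟨e4, _⟩ | ⟨e4, _⟩ <;> rw [e4] at hmax
      · exact hmax
      · linarith [nonneg hl (g * h⁻¹ * h⁻¹), nonneg hm (g * h⁻¹ * h⁻¹)]
  -- step 6 : split the value of R
  have hRl_ub : ℓ (g * h⁻¹ * h⁻¹) ≤ ℓ (g * h⁻¹) + ℓ h := by
    rcases axIV hl (g * h⁻¹) h⁻¹ with heq | hmax
    · rw [e2, hzl] at heq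
      rw [heq]
      linarith [nonneg hl (g * h⁻¹)]
    · have := le_trans (le_max_left _ _) hmax
      rw [inv hl] at this
      exact this
  have hRm_ub : m (g * h⁻¹ * h⁻¹) ≤ m (g * h⁻¹) + m h := by
    rcases axIV hm (g * h⁻¹) h⁻¹ with heq | hmax
    · rw [e2, hzm] at heq
      rw [heq]
      linarith [nonneg hm (g * h⁻¹)]
    · have := le_trans (le_max_left _ _) hmax
      rw [inv hm] at this
      exact this
  have hRl : ℓ (g * h⁻¹ * h⁻¹) = ℓ (g * h⁻¹) + ℓ h := by linarith
  have hRm : m (g * h⁻¹ * h⁻¹) = m (g * h⁻¹) + m h := by linarith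
  -- step 7 : ℓ(Q) = ℓ h + ℓ(g h)  where Q = (g * (g h⁻¹)) * (g h)
  have e3 : g * (g * h⁻¹) * (g * h)⁻¹ = g * (g * h⁻¹ * h⁻¹) * g⁻¹ := by group
  have hQl : ℓ (g * (g * h⁻¹) * (g * h)) = ℓ h + ℓ (g * h) := by
    rcases axV hl (g * (g * h⁻¹)) (g * h) (by rw [hPl]; exact hL) h0a with
      ⟨heq, hlt⟩ | hmax
    · rw [e3, conj hl, hRl] at heq
      rw [hPl, heq] at hlt
      linarith
    · rw [e3, conj hl, hRl, hPl] at hmax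
      rcases max_cases (ℓ (g * (g * h⁻¹) * (g * h))) (ℓ (g * h⁻¹) + ℓ h) with
        ⟨e4, _⟩ | ⟨e4, _⟩ <;> rw [e4] at hmax
      · exact hmax
      · linarith
  -- step 8 : m(Q) = m(g h⁻¹) + m h
  have hQm : m (g * (g * h⁻¹) * (g * h)) = m (g * h⁻¹) + m h := by
    rcases axIV hm (g * (g * h⁻¹)) (g * h) with heq | hmax
    · rw [e3, conj hm, hRm] at heq; exact heq
    · have := le_trans (le_max_right _ _) hmax
      rw [e3, conj hm, hRm, hPm] at this
      linarith
  -- step 9 : contradiction via IV(s)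
  have hsIV3 := axIV hs (g * (g * h⁻¹)) (g * h)
  rcases hsIV3 with heq | hmax
  · rw [e3, conj hl, conj hm, hRl, hRm, hQl, hQm] at heq
    linarith
  · have h1 := le_trans (le_max_left _ _) hmax
    rw [hQl, hQm, hPl, hPm] at h1
    linarith

/-- Forward coherence, all cases. -/
theorem fwd_coh (hl : IsLengthFunction ℓ) (hm : IsLengthFunction m)
    (hs : IsLengthFunction (fun x => ℓ x + m x)) {g h : G}
    (hab : ℓ (g * h⁻¹) < ℓ (g * h)) (hcd : m (g * h) < m (g * h⁻¹)) : False := by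
  have hlg := nonneg hl g
  have hmg := nonneg hm g
  have hlh := nonneg hl h
  have hmh := nonneg hm h
  by_cases hsg : ℓ g + m g = 0
  · exact fwd_coh_zero hl hm hs (by linarith) (by linarith) hab hcd
  by_cases hsh : ℓ h + m h = 0
  · have hzl : ℓ h = 0 := by linarith
    have hzm : m h = 0 := by linarith
    have hcomm : ℓ (h * g) = ℓ (g * h) := (comm hl g h).symm
    have hinvv : ℓ (h * g⁻¹) = ℓ (g * h⁻¹) := by
      have e : (h * g⁻¹)⁻¹ = g * h⁻¹ := by group
      rw [← e, inv hl]
    have hcommm : m (h * g) = m (g * h) := (comm hm g h).symm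
    have hinvm : m (h * g⁻¹) = m (g * h⁻¹) := by
      have e : (h * g⁻¹)⁻¹ = g * h⁻¹ := by group
      rw [← e, inv hm]
    refine fwd_coh_zero (g := h) (h := g) hl hm hs hzl hzm ?_ ?_
    · rw [hcomm, hinvv]; exact hab
    · rw [hcommm, hinvm]; exact hcd
  · have hpg : 0 < ℓ g + m g := lt_of_le_of_ne (by linarith) (Ne.symm hsg)
    have hph : 0 < ℓ h + m h := lt_of_le_of_ne (by linarith) (Ne.symm hsh)
    have haS : ℓ (g * h) ≤ ℓ g + ℓ h :=
      le_trans (le_max_left _ _) ((axIV hl g h).resolve_left (ne_of_gt hab))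
    have hdS : m (g * h⁻¹) ≤ m g + m h :=
      le_trans (le_max_right _ _) ((axIV hm g h).resolve_left (ne_of_lt hcd))
    have hsV := axV hs g h hpg hph
    rcases hsV with ⟨heq, hlt⟩ | hmax
    · linarith
    · rcases max_cases (ℓ (g * h) + m (g * h)) (ℓ (g * h⁻¹) + m (g * h⁻¹)) with
        ⟨e4, _⟩ | ⟨e4, _⟩ <;> rw [e4] at hmax <;> linarith

end LFAux
end Aux


/-- the pointwise sum of two axiomatic length functions is again an
axiomatic length function iff they have compatible combinatorics and are
coherently oriented. -/
theorem sum_isLengthFunction_iff {G : Type*} [Group G] (ℓ m : G → ℝ)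
    (hℓ : IsLengthFunction ℓ) (hm : IsLengthFunction m) :
    IsLengthFunction (fun g => ℓ g + m g) ↔
      CompatibleCombinatorics ℓ m ∧ CoherentlyOriented ℓ m := by
  constructor
  · intro hs
    have hs' : IsLengthFunction (fun g => m g + ℓ g) := by
      have e : (fun g : G => m g + ℓ g) = (fun g => ℓ g + m g) := by
        funext x; ring
      rw [e]; exact hs
    refine ⟨⟨LFAux.fwd_compat hℓ hm hs, ?_⟩, ?_⟩
    · rw [Set.inter_comm]
      exact LFAux.fwd_compat hm hℓ hs'
    · intro p hp
      obtain ⟨g, h⟩ := p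
      simp only [OverlapSet, Set.mem_inter_iff, Set.mem_setOf_eq] at hp
      obtain ⟨⟨hgh, hlne⟩, ⟨_, hmne⟩⟩ := hp
      constructor
      · intro hab
        by_contra hnd
        exact LFAux.fwd_coh hℓ hm hs hab (lt_of_le_of_ne (not_lt.mp hnd) hmne)
      · intro hcd
        by_contra hnd
        exact LFAux.fwd_coh hm hℓ hs' hcd (lt_of_le_of_ne (not_lt.mp hnd) hlne)
  · rintro ⟨⟨hOD, hDO⟩, hcoh⟩
    refine ⟨fun g => add_nonneg (LFAux.nonneg hℓ g) (LFAux.nonneg hm g),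
      ?_, ?_, ?_, ?_, ?_, ?_⟩
    · show ℓ (1 : G) + m 1 = 0
      rw [LFAux.one hℓ, LFAux.one hm]; ring
    · intro g
      show ℓ g + m g = ℓ g⁻¹ + m g⁻¹
      rw [LFAux.inv hℓ, LFAux.inv hm]
    · intro x y
      show ℓ (y * x * y⁻¹) + m (y * x * y⁻¹) = ℓ x + m x
      rw [LFAux.conj hℓ, LFAux.conj hm]
    · exact LFAux.sum_IV hℓ hm hOD hDO
    · exact LFAux.sum_V hℓ hm hOD hDO hcoh
    · exact LFAux.sum_VI hℓ hm hOD
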